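/- arXiv:2304.06326 — 2 statements merged into one kernel-verified Lean document; each statement's English description precedes it below -/
import Mathlib

section
/- If Q ∈ R^{p×p} is symmetric with ‖Q - I‖ ≤ 1/2 and A ∈ R^{n×p} has full row rank with smallest singular value σ, then for λ ≥ 0, ‖A^T(A Q A^T + λI)^{-1} - A^T(A A^T + λI)^{-1}‖ ≤ C ‖Q - I‖ / σ for a constant C depending only on ‖A‖/σ. -/
open Matrix

/-- Euclidean norm of a vector in `ℝ^k`. -/
noncomputable def e2 {k : ℕ} (v : Fin k → ℝ) : ℝ := Real.sqrt (∑ i, v i ^ 2)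

/-- Spectral (ℓ2 operator) norm of a matrix. -/
noncomputable def spec {m p : ℕ} (A : Matrix (Fin m) (Fin p) ℝ) : ℝ :=
  ⨆ v : {v : Fin p → ℝ // e2 v ≤ 1}, e2 (A.mulVec v.1)

lemma e2_nonneg {k : ℕ} (v : Fin k → ℝ) : 0 ≤ e2 v := Real.sqrt_nonneg _

lemma dot_self_nonneg {k : ℕ} (v : Fin k → ℝ) : 0 ≤ v ⬝ᵥ v :=
  Finset.sum_nonneg fun i _ => mul_self_nonneg _

lemma e2_eq {k : ℕ} (v : Fin k → ℝ) : e2 v = Real.sqrt (v ⬝ᵥ v) := by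
  simp [e2, dotProduct, sq]

lemma sq_e2 {k : ℕ} (v : Fin k → ℝ) : e2 v ^ 2 = v ⬝ᵥ v := by
  rw [e2_eq]; exact Real.sq_sqrt (dot_self_nonneg v)

lemma e2_zero_iff {k : ℕ} (v : Fin k → ℝ) : e2 v = 0 ↔ v = 0 := by
  constructor
  · intro h
    have h2 : ∑ i, v i ^ 2 = 0 := by
      have := congrArg (· ^ 2) h
      simpa [e2, Real.sq_sqrt (Finset.sum_nonneg fun i _ => sq_nonneg (v i))] using this
    funext i
    have := (Finset.sum_eq_zero_iff_of_nonneg (fun i _ => sq_nonneg (v i))).mp h2 i (by simp)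
    exact pow_eq_zero_iff (n := 2) (by norm_num) |>.mp this
  · rintro rfl; simp [e2]

lemma e2_neg {k : ℕ} (v : Fin k → ℝ) : e2 (-v) = e2 v := by
  simp [e2]

lemma e2_smul {k : ℕ} (c : ℝ) (v : Fin k → ℝ) : e2 (c • v) = |c| * e2 v := by
  simp only [e2, Pi.smul_apply, smul_eq_mul, mul_pow, ← Finset.mul_sum]
  rw [Real.sqrt_mul (sq_nonneg c), Real.sqrt_sq_eq_abs]

lemma abs_dot_le {k : ℕ} (x y : Fin k → ℝ) : |x ⬝ᵥ y| ≤ e2 x * e2 y := by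
  rw [← Real.sqrt_sq_eq_abs, e2, e2, ← Real.sqrt_mul (Finset.sum_nonneg fun i _ => sq_nonneg _)]
  exact Real.sqrt_le_sqrt (Finset.sum_mul_sq_le_sq_mul_sq Finset.univ x y)

lemma dot_le {k : ℕ} (x y : Fin k → ℝ) : x ⬝ᵥ y ≤ e2 x * e2 y :=
  (le_abs_self _).trans (abs_dot_le x y)

lemma neg_dot_le {k : ℕ} (x y : Fin k → ℝ) : -(e2 x * e2 y) ≤ x ⬝ᵥ y :=
  neg_le_of_abs_le (abs_dot_le x y)

lemma e2_mulVec_le_frob {m p : ℕ} (A : Matrix (Fin m) (Fin p) ℝ) (v : Fin p → ℝ) :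
    e2 (A.mulVec v) ≤ Real.sqrt (∑ i, ∑ j, A i j ^ 2) * e2 v := by
  rw [e2, e2, ← Real.sqrt_mul (by positivity : (0:ℝ) ≤ ∑ i, ∑ j, A i j ^ 2)]
  apply Real.sqrt_le_sqrt
  rw [Finset.sum_mul]
  apply Finset.sum_le_sum
  intro i _
  simpa [mulVec, dotProduct] using Finset.sum_mul_sq_le_sq_mul_sq Finset.univ (A i) v

lemma spec_nonneg {m p : ℕ} (A : Matrix (Fin m) (Fin p) ℝ) : 0 ≤ spec A :=
  Real.iSup_nonneg fun v => e2_nonneg _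

lemma spec_bddAbove {m p : ℕ} (A : Matrix (Fin m) (Fin p) ℝ) :
    BddAbove (Set.range fun v : {v : Fin p → ℝ // e2 v ≤ 1} => e2 (A.mulVec v.1)) := by
  refine ⟨Real.sqrt (∑ i, ∑ j, A i j ^ 2), ?_⟩
  rintro x ⟨v, rfl⟩
  calc e2 (A.mulVec v.1) ≤ Real.sqrt (∑ i, ∑ j, A i j ^ 2) * e2 v.1 := e2_mulVec_le_frob A v.1
    _ ≤ Real.sqrt (∑ i, ∑ j, A i j ^ 2) * 1 :=
        mul_le_mul_of_nonneg_left v.2 (Real.sqrt_nonneg _)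
    _ = _ := mul_one _

lemma le_spec {m p : ℕ} (A : Matrix (Fin m) (Fin p) ℝ) (v : Fin p → ℝ) (h : e2 v ≤ 1) :
    e2 (A.mulVec v) ≤ spec A :=
  le_ciSup (spec_bddAbove A) (⟨v, h⟩ : {v : Fin p → ℝ // e2 v ≤ 1})

lemma e2_mulVec_le_spec {m p : ℕ} (A : Matrix (Fin m) (Fin p) ℝ) (v : Fin p → ℝ) :
    e2 (A.mulVec v) ≤ spec A * e2 v := by
  rcases eq_or_ne (e2 v) 0 with h | h
  · rw [(e2_zero_iff v).mp h]
    simp [e2_zero_iff, h, (e2_zero_iff (0 : Fin p → ℝ)).mpr rfl]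
    simp [e2]
  · have hpos : 0 < e2 v := lt_of_le_of_ne (e2_nonneg v) (Ne.symm h)
    have hu : e2 ((e2 v)⁻¹ • v) ≤ 1 := by
      rw [e2_smul, abs_of_nonneg (inv_nonneg.mpr hpos.le), inv_mul_cancel₀ h]
    have := le_spec A _ hu
    rw [mulVec_smul, e2_smul, abs_of_nonneg (inv_nonneg.mpr hpos.le)] at this
    calc e2 (A.mulVec v) = e2 v * ((e2 v)⁻¹ * e2 (A.mulVec v)) := by
          field_simp
      _ ≤ e2 v * spec A := mul_le_mul_of_nonneg_left this hpos.le
      _ = spec A * e2 v := mul_comm _ _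

lemma spec_le {m p : ℕ} (A : Matrix (Fin m) (Fin p) ℝ) (c : ℝ) (hc : 0 ≤ c)
    (h : ∀ v, e2 v ≤ 1 → e2 (A.mulVec v) ≤ c) : spec A ≤ c :=
  Real.iSup_le (fun v => h v.1 v.2) hc

lemma dot_mulVec_comm {m p : ℕ} (A : Matrix (Fin m) (Fin p) ℝ) (w : Fin p → ℝ) (x : Fin m → ℝ) :
    (A *ᵥ w) ⬝ᵥ x = w ⬝ᵥ (Aᵀ *ᵥ x) := by
  rw [dotProduct_comm, dotProduct_mulVec, ← mulVec_transpose, dotProduct_comm]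

section coercive
variable {n : ℕ} {M : Matrix (Fin n) (Fin n) ℝ} {c : ℝ}

lemma coercive_lower (hc : 0 < c) (h : ∀ x, c * (x ⬝ᵥ x) ≤ (M *ᵥ x) ⬝ᵥ x) (x : Fin n → ℝ) :
    c * e2 x ≤ e2 (M *ᵥ x) := by
  rcases eq_or_ne (e2 x) 0 with hx | hx
  · rw [hx, mul_zero]; exact e2_nonneg _
  · have hpos : 0 < e2 x := lt_of_le_of_ne (e2_nonneg x) (Ne.symm hx)
    have h1 : c * (e2 x * e2 x) ≤ e2 (M *ᵥ x) * e2 x := by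
      calc c * (e2 x * e2 x) = c * (x ⬝ᵥ x) := by rw [← sq_e2]; ring
        _ ≤ (M *ᵥ x) ⬝ᵥ x := h x
        _ ≤ e2 (M *ᵥ x) * e2 x := dot_le _ _
    have := le_of_mul_le_mul_right (by linarith [h1] : (c * e2 x) * e2 x ≤ e2 (M *ᵥ x) * e2 x) hpos
    exact this

lemma coercive_isUnit_det (hc : 0 < c) (h : ∀ x, c * (x ⬝ᵥ x) ≤ (M *ᵥ x) ⬝ᵥ x) :
    IsUnit M.det := by
  rw [isUnit_iff_ne_zero]
  intro hdet
  obtain ⟨v, hv, hMv⟩ := Matrix.exists_mulVec_eq_zero_iff.mpr hdet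
  have := coercive_lower hc h v
  rw [hMv, (e2_zero_iff (0 : Fin n → ℝ)).mpr rfl] at this
  have hv2 : e2 v = 0 := le_antisymm (by nlinarith [e2_nonneg v]) (e2_nonneg v)
  exact hv ((e2_zero_iff v).mp hv2)
lemma coercive_mulVec_inv (hc : 0 < c) (h : ∀ x, c * (x ⬝ᵥ x) ≤ (M *ᵥ x) ⬝ᵥ x) (y : Fin n → ℝ) :
    M *ᵥ (M⁻¹ *ᵥ y) = y := by
  rw [mulVec_mulVec, Matrix.mul_nonsing_inv M (coercive_isUnit_det hc h), one_mulVec]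

lemma coercive_inv_bound (hc : 0 < c) (h : ∀ x, c * (x ⬝ᵥ x) ≤ (M *ᵥ x) ⬝ᵥ x) (y : Fin n → ℝ) :
    e2 (M⁻¹ *ᵥ y) ≤ c⁻¹ * e2 y := by
  have h1 := coercive_lower hc h (M⁻¹ *ᵥ y)
  rw [coercive_mulVec_inv hc h y] at h1
  rw [inv_mul_eq_div, le_div_iff₀ hc]
  linarith [h1]

end coercive

/-- If `Q` is symmetric with `‖Q - I‖ ≤ 1/2` and `A` has full row rank with
smallest singular value `σ > 0`, then for `λ ≥ 0`,
`‖Aᵀ(AQAᵀ + λI)⁻¹ - Aᵀ(AAᵀ + λI)⁻¹‖ ≤ C ‖Q - I‖ / σ` with `C` depending only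
on `‖A‖/σ`. -/
theorem perturbed_metric_ridge_bound :
    ∃ C : ℝ → ℝ,
      ∀ (n p : ℕ) (A : Matrix (Fin n) (Fin p) ℝ) (Q : Matrix (Fin p) (Fin p) ℝ)
        (σ lam : ℝ),
        A.rank = n →
        0 < σ →
        (∀ v : Fin n → ℝ, σ * e2 v ≤ e2 (A.vecMul v)) →
        Q.IsSymm →
        spec (Q - 1) ≤ 1 / 2 →
        0 ≤ lam →
        spec (A.transpose * (A * Q * A.transpose + lam • (1 : Matrix (Fin n) (Fin n) ℝ))⁻¹ -
              A.transpose * (A * A.transpose + lam • (1 : Matrix (Fin n) (Fin n) ℝ))⁻¹)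
          ≤ C (spec A / σ) * spec (Q - 1) / σ := by
  use fun t => 4 * t
  intro n p A Q σ lam hrank hσ hσmin hQsym hQ hlam
  set M0 : Matrix (Fin n) (Fin n) ℝ := A * Aᵀ + lam • 1 with hM0def
  set M : Matrix (Fin n) (Fin n) ℝ := A * Q * Aᵀ + lam • 1 with hMdef
  have hσ2 : (0:ℝ) < σ ^ 2 / 2 := by positivity
  -- lower bound for Aᵀ *ᵥ x
  have hw : ∀ x : Fin n → ℝ, σ * e2 x ≤ e2 (Aᵀ *ᵥ x) := by
    intro x; rw [mulVec_transpose]; exact hσmin x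
  have hAAT : ∀ x : Fin n → ℝ, σ ^ 2 * (x ⬝ᵥ x) ≤ (Aᵀ *ᵥ x) ⬝ᵥ (Aᵀ *ᵥ x) := by
    intro x
    have h1 := hw x
    have h2 := mul_self_le_mul_self (mul_nonneg hσ.le (e2_nonneg x)) h1
    nlinarith [sq_e2 x, sq_e2 (Aᵀ *ᵥ x)]
  -- Q is bounded below by 1/2
  have hQlow : ∀ w : Fin p → ℝ, (1/2) * (w ⬝ᵥ w) ≤ (Q *ᵥ w) ⬝ᵥ w := by
    intro w
    have h1 : Q *ᵥ w = ((Q - 1) *ᵥ w) + w := by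
      rw [sub_mulVec, one_mulVec, sub_add_cancel]
    rw [h1, add_dotProduct]
    have h2 := neg_dot_le ((Q - 1) *ᵥ w) w
    have h3 : e2 ((Q - 1) *ᵥ w) ≤ (1/2) * e2 w :=
      (e2_mulVec_le_spec (Q - 1) w).trans (mul_le_mul_of_nonneg_right hQ (e2_nonneg w))
    nlinarith [sq_e2 w, e2_nonneg w, e2_nonneg ((Q - 1) *ᵥ w)]
  -- dot-product identities
  have hATdot : ∀ y : Fin n → ℝ, ((A * Aᵀ) *ᵥ y) ⬝ᵥ y = (Aᵀ *ᵥ y) ⬝ᵥ (Aᵀ *ᵥ y) := by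
    intro y; rw [← mulVec_mulVec, dot_mulVec_comm]
  have hAQAT : ∀ y : Fin n → ℝ, ((A * Q * Aᵀ) *ᵥ y) ⬝ᵥ y = (Q *ᵥ (Aᵀ *ᵥ y)) ⬝ᵥ (Aᵀ *ᵥ y) := by
    intro y; rw [← mulVec_mulVec, ← mulVec_mulVec, dot_mulVec_comm]
  have hlamdot : ∀ y : Fin n → ℝ, ((lam • (1 : Matrix (Fin n) (Fin n) ℝ)) *ᵥ y) ⬝ᵥ y
      = lam * (y ⬝ᵥ y) := by
    intro y; rw [smul_mulVec, one_mulVec, smul_dotProduct]; simp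
  -- coercivity of M and M0
  have hcM : ∀ y : Fin n → ℝ, σ ^ 2 / 2 * (y ⬝ᵥ y) ≤ (M *ᵥ y) ⬝ᵥ y := by
    intro y
    rw [hMdef, add_mulVec, add_dotProduct, hAQAT, hlamdot]
    have h1 := hQlow (Aᵀ *ᵥ y)
    have h2 := hAAT y
    have h3 := dot_self_nonneg y
    nlinarith
  have hcM0 : ∀ y : Fin n → ℝ, σ ^ 2 / 2 * (y ⬝ᵥ y) ≤ (M0 *ᵥ y) ⬝ᵥ y := by
    intro y
    rw [hM0def, add_mulVec, add_dotProduct, hATdot, hlamdot]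
    have h2 := hAAT y
    have h3 := dot_self_nonneg y
    nlinarith
  have hMdet : IsUnit M.det := coercive_isUnit_det hσ2 hcM
  have hM0det : IsUnit M0.det := coercive_isUnit_det hσ2 hcM0
  -- bounds ‖Aᵀ M⁻¹ x‖ ≤ (2/σ)‖x‖ and same for M0
  have hkey : ∀ (N : Matrix (Fin n) (Fin n) ℝ), IsUnit N.det →
      (∀ y, σ ^ 2 / 2 * (y ⬝ᵥ y) ≤ (N *ᵥ y) ⬝ᵥ y) →
      (∀ y, (Aᵀ *ᵥ y) ⬝ᵥ (Aᵀ *ᵥ y) ≤ 2 * ((N *ᵥ y) ⬝ᵥ y)) →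
      ∀ x : Fin n → ℝ, e2 (Aᵀ *ᵥ (N⁻¹ *ᵥ x)) ≤ 2 / σ * e2 x := by
    intro N hNdet hNco hNup x
    set y := N⁻¹ *ᵥ x with hydef
    have hNy : N *ᵥ y = x := coercive_mulVec_inv hσ2 hNco x
    have h1 : (Aᵀ *ᵥ y) ⬝ᵥ (Aᵀ *ᵥ y) ≤ 2 * (x ⬝ᵥ y) := by
      have := hNup y; rwa [hNy] at this
    have h2 : x ⬝ᵥ y ≤ e2 x * e2 y := dot_le x y
    have h3 : e2 y ≤ (σ ^ 2 / 2)⁻¹ * e2 x := coercive_inv_bound hσ2 hNco x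
    have h4 : σ ^ 2 * e2 y ≤ 2 * e2 x := by
      rw [show (σ ^ 2 / 2)⁻¹ * e2 x = 2 * e2 x / σ ^ 2 by field_simp] at h3
      rw [← le_div_iff₀' (by positivity : (0:ℝ) < σ ^ 2)]
      linarith
    have h8 : e2 (Aᵀ *ᵥ y) ^ 2 ≤ (2 / σ * e2 x) ^ 2 := by
      rw [sq_e2]
      have hexp : (2 / σ * e2 x) ^ 2 = 4 * e2 x ^ 2 / σ ^ 2 := by
        field_simp; ring
      rw [hexp, le_div_iff₀ (by positivity : (0:ℝ) < σ ^ 2)]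
      nlinarith [e2_nonneg x, e2_nonneg y, sq_nonneg σ]
    have := Real.sqrt_le_sqrt h8
    rwa [Real.sqrt_sq (e2_nonneg _), Real.sqrt_sq (mul_nonneg (by positivity) (e2_nonneg x))] at this
  have hAMinv : ∀ x : Fin n → ℝ, e2 (Aᵀ *ᵥ (M⁻¹ *ᵥ x)) ≤ 2 / σ * e2 x := by
    refine hkey M hMdet hcM ?_
    intro y
    rw [hMdef, add_mulVec, add_dotProduct, hAQAT, hlamdot]
    have h1 := hQlow (Aᵀ *ᵥ y)
    have h3 := dot_self_nonneg y
    nlinarith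
  have hAM0inv : ∀ x : Fin n → ℝ, e2 (Aᵀ *ᵥ (M0⁻¹ *ᵥ x)) ≤ 2 / σ * e2 x := by
    refine hkey M0 hM0det hcM0 ?_
    intro y
    rw [hM0def, add_mulVec, add_dotProduct, hATdot, hlamdot]
    have h2 := hAAT y
    have h3 := dot_self_nonneg y
    nlinarith [hATdot y, dot_self_nonneg (Aᵀ *ᵥ y)]
  -- algebraic identity
  have hMM : A * (1 - Q) * Aᵀ = M0 - M := by
    rw [hM0def, hMdef, Matrix.mul_sub, Matrix.mul_one, Matrix.sub_mul]
    abel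
  have h2 : M⁻¹ * ((M0 - M) * M0⁻¹) = M⁻¹ - M0⁻¹ := by
    rw [sub_mul, Matrix.mul_nonsing_inv _ hM0det, mul_sub, mul_one, ← Matrix.mul_assoc,
      Matrix.nonsing_inv_mul _ hMdet, Matrix.one_mul]
  have hId : Aᵀ * M⁻¹ - Aᵀ * M0⁻¹ = (Aᵀ * M⁻¹) * ((A * (1 - Q)) * (Aᵀ * M0⁻¹)) := by
    calc Aᵀ * M⁻¹ - Aᵀ * M0⁻¹ = Aᵀ * (M⁻¹ - M0⁻¹) := (Matrix.mul_sub _ _ _).symm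
      _ = Aᵀ * (M⁻¹ * ((M0 - M) * M0⁻¹)) := by rw [h2]
      _ = Aᵀ * (M⁻¹ * ((A * (1 - Q) * Aᵀ) * M0⁻¹)) := by rw [hMM]
      _ = (Aᵀ * M⁻¹) * ((A * (1 - Q)) * (Aᵀ * M0⁻¹)) := by
        simp only [Matrix.mul_assoc]
  -- final bound
  have hsA := spec_nonneg A
  have hsQ := spec_nonneg (Q - 1)
  show spec (Aᵀ * M⁻¹ - Aᵀ * M0⁻¹) ≤ 4 * (spec A / σ) * spec (Q - 1) / σ
  apply spec_le _ _ (div_nonneg (mul_nonneg (mul_nonneg (by norm_num) (div_nonneg hsA hσ.le)) hsQ) hσ.le)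
  intro v hv
  rw [hId]
  simp only [← mulVec_mulVec]
  have c1 : e2 (Aᵀ *ᵥ (M0⁻¹ *ᵥ v)) ≤ 2 / σ := by
    have h1 := hAM0inv v
    have h2 : 2 / σ * e2 v ≤ 2 / σ * 1 := mul_le_mul_of_nonneg_left hv (by positivity)
    linarith
  have c2 : e2 ((1 - Q) *ᵥ (Aᵀ *ᵥ (M0⁻¹ *ᵥ v))) ≤ spec (Q - 1) * (2 / σ) := by
    rw [show (1 - Q : Matrix (Fin p) (Fin p) ℝ) = -(Q - 1) from (neg_sub _ _).symm,
      neg_mulVec, e2_neg]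
    exact (e2_mulVec_le_spec _ _).trans (mul_le_mul_of_nonneg_left c1 hsQ)
  have c3 : e2 (A *ᵥ ((1 - Q) *ᵥ (Aᵀ *ᵥ (M0⁻¹ *ᵥ v)))) ≤ spec A * (spec (Q - 1) * (2 / σ)) :=
    (e2_mulVec_le_spec _ _).trans (mul_le_mul_of_nonneg_left c2 hsA)
  have c4 := (hAMinv (A *ᵥ ((1 - Q) *ᵥ (Aᵀ *ᵥ (M0⁻¹ *ᵥ v))))).trans
    (mul_le_mul_of_nonneg_left c3 (by positivity : (0:ℝ) ≤ 2 / σ))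
  calc e2 (Aᵀ *ᵥ (M⁻¹ *ᵥ (A *ᵥ ((1 - Q) *ᵥ (Aᵀ *ᵥ (M0⁻¹ *ᵥ v)))))) 
      ≤ 2 / σ * (spec A * (spec (Q - 1) * (2 / σ))) := c4
    _ = 4 * (spec A / σ) * spec (Q - 1) / σ := by field_simp; ring
end

section
/- In the quadratic-kernel setting with feature map Φ(x) = [a1 x, a2 x x^T] and x_i = e_i, the kernel ridgeless estimator f̂(x) = (a1²+a2²)^{-1} Σ_i (a1² x_i + a2² x_i²) β_i differs from the linear target f*(x) = Σ_i β_i x_i by a function represented by (a2²/(a1²+a2²))[-β, diag(β)], and consequently, for x ∼ N(0, c I_p), E[(f̂(x) - f*(x))²] = (a2²/(a1²+a2²))² ((c + 2c²) Σ_i β_i² + c² (Σ_i β_i)²). -/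
open Matrix MeasureTheory ProbabilityTheory

open Real Filter
open scoped ENNReal NNReal


private lemma intJ {b : ℝ} (hb : 0 < b) (k : ℕ) :
    Integrable (fun x : ℝ => x ^ k * rexp (-b * x ^ 2)) := by
  have h := integrable_rpow_mul_exp_neg_mul_sq hb (s := (k : ℝ))
    (by exact_mod_cast neg_one_lt_zero.trans_le (Nat.cast_nonneg k))
  simpa [Real.rpow_natCast] using h

private lemma Jodd {b : ℝ} {k : ℕ} (hk : Odd k) :
    ∫ x : ℝ, x ^ k * rexp (-b * x ^ 2) = 0 := by
  have h := MeasureTheory.integral_neg_eq_self (fun x : ℝ => x ^ k * rexp (-b * x ^ 2)) volume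
  have h2 : ∀ x : ℝ, (-x) ^ k * rexp (-b * (-x) ^ 2) = -(x ^ k * rexp (-b * x ^ 2)) := by
    intro x
    rw [hk.neg_pow, show (-x) ^ 2 = x ^ 2 by ring, neg_mul]
  simp_rw [h2, integral_neg] at h
  linarith

private lemma Jtop {b : ℝ} (hb : 0 < b) (m : ℕ) :
    Tendsto (fun x : ℝ => x ^ m * rexp (-b * x ^ 2)) atTop (nhds 0) := by
  have h := rpow_mul_exp_neg_mul_sq_isLittleO_exp_neg hb (m : ℝ)
  simp_rw [Real.rpow_natCast] at h
  have h2 : Tendsto (fun x : ℝ => rexp (-(1/2) * x)) atTop (nhds 0) := by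
    apply Real.tendsto_exp_atBot.comp
    apply Tendsto.const_mul_atTop_of_neg (by norm_num : -(1/2 : ℝ) < 0) tendsto_id
  exact h.tendsto_zero_of_tendsto h2

private lemma Jbot {b : ℝ} (hb : 0 < b) (m : ℕ) :
    Tendsto (fun x : ℝ => x ^ m * rexp (-b * x ^ 2)) atBot (nhds 0) := by
  have h : Tendsto (fun x : ℝ => (-1 : ℝ) ^ m * ((-x) ^ m * rexp (-b * (-x) ^ 2))) atBot (nhds 0) := by
    have := ((Jtop hb m).comp tendsto_neg_atBot_atTop).const_mul ((-1 : ℝ) ^ m)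
    simpa using this
  convert h using 2 with x
  rw [← mul_assoc, ← mul_pow]
  norm_num [show (-b * (-x)^2) = -b * x ^ 2 by ring]

private lemma Jrec {b : ℝ} (hb : 0 < b) (m : ℕ) :
    (2 * b) * ∫ x : ℝ, x ^ (m + 2) * rexp (-b * x ^ 2)
      = (m + 1 : ℝ) * ∫ x : ℝ, x ^ m * rexp (-b * x ^ 2) := by
  set F : ℝ → ℝ := fun x => x ^ (m + 1) * rexp (-b * x ^ 2) with hF
  set F' : ℝ → ℝ := fun x =>
    (m + 1 : ℝ) * (x ^ m * rexp (-b * x ^ 2)) - (2 * b) * (x ^ (m + 2) * rexp (-b * x ^ 2)) with hF'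
  have hderiv : ∀ x : ℝ, HasDerivAt F (F' x) x := by
    intro x
    have h1 : HasDerivAt (fun x : ℝ => x ^ (m + 1)) ((m + 1 : ℝ) * x ^ m) x := by
      simpa using hasDerivAt_pow (m + 1) x
    have h2 : HasDerivAt (fun x : ℝ => -b * x ^ 2) (-b * (2 * x)) x := by
      simpa using (hasDerivAt_pow 2 x).const_mul (-b)
    have h3 : HasDerivAt (fun x : ℝ => rexp (-b * x ^ 2)) (rexp (-b * x ^ 2) * (-b * (2 * x))) x :=
      (Real.hasDerivAt_exp _).comp x h2
    have := h1.mul h3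
    refine this.congr_deriv ?_
    simp only [hF']
    ring
  have hint : IntegrableOn F' (Set.Ioi 0) volume :=
    (((intJ hb m).const_mul _).sub ((intJ hb (m+2)).const_mul _)).integrableOn
  have hint2 : IntegrableOn F' (Set.Iic 0) volume :=
    (((intJ hb m).const_mul _).sub ((intJ hb (m+2)).const_mul _)).integrableOn
  have hIoi : ∫ x in Set.Ioi (0:ℝ), F' x = 0 - F 0 :=
    integral_Ioi_of_hasDerivAt_of_tendsto' (fun x _ => hderiv x) hint (Jtop hb (m+1))
  have hIic : ∫ x in Set.Iic (0:ℝ), F' x = F 0 - 0 :=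
    integral_Iic_of_hasDerivAt_of_tendsto' (fun x _ => hderiv x) hint2 (Jbot hb (m+1))
  have htot : ∫ x : ℝ, F' x = 0 := by
    rw [← intervalIntegral.integral_Iic_add_Ioi hint2 hint, hIoi, hIic]
    ring
  rw [hF'] at htot
  rw [integral_sub (((intJ hb m)).const_mul _) (((intJ hb (m+2))).const_mul _),
    integral_const_mul, integral_const_mul] at htot
  linarith

private lemma gauss_pdf_eq {c : NNReal} (hc : c ≠ 0) (t : ℝ) :
    gaussianPDFReal 0 c t = (√(2 * π * c))⁻¹ * rexp (-(2 * (c:ℝ))⁻¹ * t ^ 2) := by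
  have hc' : (0:ℝ) < c := NNReal.coe_pos.mpr (zero_lt_iff.mpr hc)
  rw [gaussianPDFReal]
  congr 1
  rw [sub_zero]
  congr 1
  field_simp

private lemma gauss_integral_eq {c : NNReal} (hc : c ≠ 0) (f : ℝ → ℝ) :
    ∫ t, f t ∂(gaussianReal 0 c) = ∫ t, gaussianPDFReal 0 c t * f t := by
  rw [gaussianReal_of_var_ne_zero 0 hc]
  have : (gaussianPDF 0 c) = fun x => ((gaussianPDFReal 0 c x).toNNReal : ℝ≥0∞) := by
    ext x; rw [gaussianPDF]; rfl
  rw [this, integral_withDensity_eq_integral_smul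
    (by exact (measurable_gaussianPDFReal 0 c).real_toNNReal) f]
  congr 1 with t
  rw [NNReal.smul_def, smul_eq_mul, Real.coe_toNNReal _ (gaussianPDFReal_nonneg 0 c t)]

private lemma gauss_integrable_pow (c : NNReal) (k : ℕ) :
    Integrable (fun t : ℝ => t ^ k) (gaussianReal 0 c) := by
  by_cases hc : c = 0
  · rw [hc, gaussianReal_zero_var]
    exact (integrable_const _).congr (MeasureTheory.ae_eq_dirac (fun t : ℝ => t ^ k)).symm
  · have hc' : (0:ℝ) < c := NNReal.coe_pos.mpr (zero_lt_iff.mpr hc)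
    have hb : (0:ℝ) < (2 * (c:ℝ))⁻¹ := by positivity
    rw [gaussianReal_of_var_ne_zero 0 hc]
    have : (gaussianPDF 0 c) = fun x => ((gaussianPDFReal 0 c x).toNNReal : ℝ≥0∞) := by
      ext x; rw [gaussianPDF]; rfl
    rw [this, integrable_withDensity_iff_integrable_smul
      (by exact (measurable_gaussianPDFReal 0 c).real_toNNReal)]
    have heq : (fun t : ℝ => (gaussianPDFReal 0 c t).toNNReal • t ^ k)
        = fun t : ℝ => (√(2 * π * c))⁻¹ * (t ^ k * rexp (-(2 * (c:ℝ))⁻¹ * t ^ 2)) := by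
      funext t
      rw [NNReal.smul_def, smul_eq_mul, Real.coe_toNNReal _ (gaussianPDFReal_nonneg 0 c t),
        gauss_pdf_eq hc]
      ring
    rw [heq]
    exact (intJ hb k).const_mul _

private lemma gauss_mom_odd {c : NNReal} {k : ℕ} (hk : Odd k) :
    ∫ t, t ^ k ∂(gaussianReal 0 c) = 0 := by
  by_cases hc : c = 0
  · rw [hc, gaussianReal_zero_var, integral_dirac]
    simp [hk.pos.ne'] -- 0 ^ k = 0 since k ≠ 0
  · rw [gauss_integral_eq hc]
    have heq : (fun t : ℝ => gaussianPDFReal 0 c t * t ^ k)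
        = fun t : ℝ => (√(2 * π * c))⁻¹ * (t ^ k * rexp (-(2 * (c:ℝ))⁻¹ * t ^ 2)) := by
      funext t; rw [gauss_pdf_eq hc]; ring
    rw [heq, integral_const_mul, Jodd hk, mul_zero]

private lemma gauss_mom_even (c : NNReal) :
    (∫ t, t ^ 2 ∂(gaussianReal 0 c) = c) ∧ (∫ t, t ^ 4 ∂(gaussianReal 0 c) = 3 * (c:ℝ)^2) := by
  by_cases hc : c = 0
  · rw [hc, gaussianReal_zero_var, integral_dirac, integral_dirac]
    norm_num
  · have hc' : (0:ℝ) < c := NNReal.coe_pos.mpr (zero_lt_iff.mpr hc)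
    set b : ℝ := (2 * (c:ℝ))⁻¹ with hbdef
    have hb : (0:ℝ) < b := by positivity
    have hsq : √(π / b) = √(2 * π * c) := by
      have : π / b = 2 * π * c := by rw [hbdef]; field_simp
      rw [this]
    have hsqpos : (0:ℝ) < √(2 * π * c) := Real.sqrt_pos.mpr (by positivity)
    have h2b : 2 * b = (c:ℝ)⁻¹ := by rw [hbdef]; field_simp
    have J0 : ∫ x : ℝ, rexp (-b * x ^ 2) = √(2 * π * c) := by
      rw [integral_gaussian, hsq]
    have e2 := Jrec hb 0
    have e4 := Jrec hb 2
    simp only [zero_add, pow_zero, one_mul, Nat.cast_zero, Nat.cast_ofNat, Nat.reduceAdd] at e2 e4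
    rw [J0, h2b] at e2
    rw [h2b] at e4
    set J2v : ℝ := ∫ x : ℝ, x ^ 2 * rexp (-b * x ^ 2) with hJ2def
    set J4v : ℝ := ∫ x : ℝ, x ^ 4 * rexp (-b * x ^ 2) with hJ4def
    have hJ2 : J2v = √(2 * π * c) * c := by
      have h := congrArg (fun z => (c:ℝ) * z) e2
      simp only [← mul_assoc, mul_inv_cancel₀ hc'.ne', one_mul] at h
      rw [h, mul_comm]
    have hJ4 : J4v = 3 * (√(2 * π * c) * c) * c := by
      rw [hJ2] at e4
      have h := congrArg (fun z => (c:ℝ) * z) e4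
      simp only [← mul_assoc, mul_inv_cancel₀ hc'.ne', one_mul] at h
      rw [h]; ring
    have key : ∀ k : ℕ, ∫ t, t ^ k ∂(gaussianReal 0 c)
        = (√(2 * π * c))⁻¹ * ∫ x : ℝ, x ^ k * rexp (-b * x ^ 2) := by
      intro k
      rw [gauss_integral_eq hc]
      have heq : (fun t : ℝ => gaussianPDFReal 0 c t * t ^ k)
          = fun t : ℝ => (√(2 * π * c))⁻¹ * (t ^ k * rexp (-b * t ^ 2)) := by
        funext t; rw [gauss_pdf_eq hc, hbdef]; ring
      rw [heq, integral_const_mul]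
    constructor
    · rw [key 2, ← hJ2def, hJ2, ← mul_assoc, inv_mul_cancel₀ hsqpos.ne', one_mul]
    · rw [key 4, ← hJ4def, hJ4]
      field_simp

private lemma integrable_pi_prod {n : ℕ} (μ : Measure ℝ) [SigmaFinite μ] {f : Fin n → ℝ → ℝ}
    (hf : ∀ i, Integrable (f i) μ) :
    Integrable (fun x : Fin n → ℝ => ∏ i, f i (x i)) (Measure.pi fun _ => μ) := by
  induction n with
  | zero =>
      simp only [Finset.univ_eq_empty, Finset.prod_empty]
      have : IsProbabilityMeasure (Measure.pi fun _ : Fin 0 => μ) := by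
        constructor
        simp [Measure.pi_empty_univ]
      exact integrable_const _
  | succ m ih =>
      have hmp := (measurePreserving_piFinSuccAbove (fun _ : Fin (m+1) => μ) 0).symm
      rw [← hmp.integrable_comp_emb (MeasurableEquiv.measurableEmbedding _)]
      simp_rw [MeasurableEquiv.piFinSuccAbove_symm_apply, Fin.insertNthEquiv,
        Fin.prod_univ_succ, Fin.insertNth_zero]
      simp only [Fin.zero_succAbove, Function.comp_def, Fin.cons_zero, Fin.cons_succ,
        Equiv.coe_fn_mk]
      exact Integrable.mul_prod (hf 0) (ih (fun i => hf _))

private lemma integral_pi_prod {n : ℕ} (μ : Measure ℝ) [SigmaFinite μ] (f : Fin n → ℝ → ℝ) :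
    ∫ x : Fin n → ℝ, ∏ i, f i (x i) ∂(Measure.pi fun _ => μ) = ∏ i, ∫ t, f i t ∂μ := by
  induction n with
  | zero =>
      simp only [Finset.univ_eq_empty, Finset.prod_empty, integral_const, smul_eq_mul, mul_one,
        Measure.pi_empty_univ, measureReal_def, ENNReal.toReal_one]
  | succ m ih =>
      calc
        _ = ∫ x : ℝ × (Fin m → ℝ),
            f 0 x.1 * ∏ i : Fin m, f (Fin.succ i) (x.2 i) ∂(μ.prod (Measure.pi fun _ => μ)) := by
          rw [← ((measurePreserving_piFinSuccAbove (fun _ : Fin (m+1) => μ) 0).symm).integral_comp']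
          simp_rw [MeasurableEquiv.piFinSuccAbove_symm_apply, Fin.insertNthEquiv,
            Fin.prod_univ_succ, Fin.insertNth_zero]
          simp only [Fin.zero_succAbove, Function.comp_def, Fin.cons_zero, Fin.cons_succ,
            Equiv.coe_fn_mk, cast_eq]
        _ = (∫ t, f 0 t ∂μ) * ∏ i : Fin m, ∫ t, f (Fin.succ i) t ∂μ := by
          rw [← ih (fun i => f (Fin.succ i)), ← integral_prod_mul]
        _ = ∏ i, ∫ t, f i t ∂μ := by rw [Fin.prod_univ_succ]

private lemma gaussian_quad_sum (c : NNReal) {p : ℕ} (a : Fin p → ℝ) :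
    ∫ x : Fin p → ℝ, (∑ j, a j * ((x j) ^ 2 - x j)) ^ 2
        ∂(Measure.pi fun _ : Fin p => gaussianReal 0 c)
      = ((c:ℝ) + 2 * (c:ℝ) ^ 2) * (∑ j, a j ^ 2) + (c:ℝ) ^ 2 * (∑ j, a j) ^ 2 := by
  set μ := gaussianReal 0 c with hμ
  set g : ℝ → ℝ := fun t => t ^ 2 - t with hg
  have i1 : Integrable (fun t : ℝ => t ^ 1) μ := gauss_integrable_pow c 1
  have i2 : Integrable (fun t : ℝ => t ^ 2) μ := gauss_integrable_pow c 2
  have i3 : Integrable (fun t : ℝ => t ^ 3) μ := gauss_integrable_pow c 3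
  have i4 : Integrable (fun t : ℝ => t ^ 4) μ := gauss_integrable_pow c 4
  have hgi : Integrable g μ := by
    have := i2.sub i1
    simpa [hg, pow_one, Pi.sub_def] using this
  have hsub : Integrable (fun t : ℝ => t ^ 4 - 2 * t ^ 3) μ := i4.sub (i3.const_mul 2)
  have hgi2 : Integrable (fun t => g t * g t) μ := by
    have key : (fun t : ℝ => g t * g t) = fun t : ℝ => t ^ 4 - 2 * t ^ 3 + t ^ 2 := by
      funext t; simp only [hg]; ring
    rw [key]
    exact hsub.add i2
  have I1 : ∫ t, g t ∂μ = (c : ℝ) := by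
    have h := integral_sub i2 i1
    have h1 : ∫ t, t ^ 1 ∂μ = 0 := gauss_mom_odd ⟨0, by norm_num⟩
    have h2 : ∫ t, t ^ 2 ∂μ = (c : ℝ) := (gauss_mom_even c).1
    calc ∫ t, g t ∂μ = ∫ t, (t ^ 2 - t ^ 1) ∂μ := by simp [hg, pow_one]
      _ = (c : ℝ) := by rw [h, h1, h2, sub_zero]
  have I2 : ∫ t, g t * g t ∂μ = (c : ℝ) + 3 * (c:ℝ) ^ 2 := by
    have h3 : ∫ t, t ^ 3 ∂μ = 0 := gauss_mom_odd ⟨1, by norm_num⟩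
    calc ∫ t, g t * g t ∂μ = ∫ t, (t ^ 4 - 2 * t ^ 3) + t ^ 2 ∂μ := by
          apply integral_congr_ae
          filter_upwards with t
          simp only [hg]; ring
      _ = (∫ t, t ^ 4 - 2 * t ^ 3 ∂μ) + ∫ t, t ^ 2 ∂μ := integral_add hsub i2
      _ = ((∫ t, t ^ 4 ∂μ) - ∫ t, 2 * t ^ 3 ∂μ) + ∫ t, t ^ 2 ∂μ := by
          rw [integral_sub i4 (i3.const_mul 2)]
      _ = ((∫ t, t ^ 4 ∂μ) - 2 * ∫ t, t ^ 3 ∂μ) + ∫ t, t ^ 2 ∂μ := by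
          rw [integral_const_mul]
      _ = (c : ℝ) + 3 * (c:ℝ) ^ 2 := by
          rw [h3, (gauss_mom_even c).1, (gauss_mom_even c).2]; ring
  set h : Fin p → Fin p → Fin p → ℝ → ℝ :=
    fun j l i t => (if i = j then g t else 1) * (if i = l then g t else 1) with hh
  have hint : ∀ j l i, Integrable (h j l i) μ := by
    intro j l i
    by_cases hj : i = j
    · subst hj
      by_cases hl : i = l
      · subst hl
        simpa [hh] using hgi2
      · simp only [hh, if_pos rfl, if_neg hl, mul_one]
        exact hgi
    · by_cases hl : i = l
      · subst hl
        simp only [hh, if_neg hj, if_pos rfl, one_mul]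
        exact hgi
      · simp only [hh, if_neg hj, if_neg hl, mul_one]
        exact integrable_const _
  have expand : ∀ x : Fin p → ℝ,
      (∑ j, a j * g (x j)) ^ 2 = ∑ j, ∑ l, (a j * a l) * ∏ i, h j l i (x i) := by
    intro x
    rw [sq, Finset.sum_mul_sum]
    refine Finset.sum_congr rfl fun j _ => Finset.sum_congr rfl fun l _ => ?_
    have hprod : ∏ i, h j l i (x i) = g (x j) * g (x l) := by
      simp only [hh]
      rw [Finset.prod_mul_distrib, Finset.prod_ite_eq' Finset.univ j (fun i => g (x i)),
        Finset.prod_ite_eq' Finset.univ l (fun i => g (x i))]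
      simp
    rw [hprod]; ring
  have termval : ∀ j l : Fin p, ∫ x : Fin p → ℝ, (a j * a l) * ∏ i, h j l i (x i)
        ∂(Measure.pi fun _ : Fin p => μ)
      = (a j * a l) * (if j = l then ((c:ℝ) + 3 * (c:ℝ)^2) else (c:ℝ)^2) := by
    intro j l
    rw [integral_const_mul, integral_pi_prod μ (fun i => h j l i)]
    congr 1
    by_cases hjl : j = l
    · subst hjl
      rw [if_pos rfl]
      have hv : ∀ i, ∫ t, h j j i t ∂μ = if i = j then ((c:ℝ) + 3 * (c:ℝ)^2) else 1 := by
        intro i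
        by_cases hij : i = j
        · subst hij
          rw [if_pos rfl]
          simp only [hh, if_pos rfl]
          exact I2
        · rw [if_neg hij]
          simp only [hh, if_neg hij, mul_one]
          simp
      rw [Finset.prod_congr rfl (fun i _ => hv i),
        Finset.prod_ite_eq' Finset.univ j (fun _ => (c:ℝ) + 3 * (c:ℝ)^2)]
      simp
    · rw [if_neg hjl]
      have hv : ∀ i, ∫ t, h j l i t ∂μ
          = (if i = j then (c:ℝ) else 1) * (if i = l then (c:ℝ) else 1) := by
        intro i
        by_cases hij : i = j
        · subst hij
          have hil : ¬ i = l := hjl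
          rw [if_pos rfl, if_neg hil, mul_one]
          simp only [hh, if_pos rfl, if_neg hil, mul_one]
          exact I1
        · by_cases hil : i = l
          · subst hil
            rw [if_neg hij, if_pos rfl, one_mul]
            simp only [hh, if_neg hij, if_pos rfl, one_mul]
            exact I1
          · rw [if_neg hij, if_neg hil, mul_one]
            simp only [hh, if_neg hij, if_neg hil, mul_one]
            simp
      rw [Finset.prod_congr rfl (fun i _ => hv i), Finset.prod_mul_distrib,
        Finset.prod_ite_eq' Finset.univ j (fun _ => (c:ℝ)),
        Finset.prod_ite_eq' Finset.univ l (fun _ => (c:ℝ))]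
      simp [sq]
  have swap : ∫ x : Fin p → ℝ, (∑ j, a j * g (x j)) ^ 2 ∂(Measure.pi fun _ : Fin p => μ)
      = ∑ j, ∑ l, (a j * a l) * (if j = l then ((c:ℝ) + 3 * (c:ℝ)^2) else (c:ℝ)^2) := by
    rw [integral_congr_ae (Filter.Eventually.of_forall expand)]
    rw [integral_finset_sum _ (fun j _ => integrable_finset_sum _
      (fun l _ => ((integrable_pi_prod μ (hint j l)).const_mul _)))]
    refine Finset.sum_congr rfl fun j _ => ?_
    rw [integral_finset_sum _ (fun l _ => ((integrable_pi_prod μ (hint j l)).const_mul _))]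
    exact Finset.sum_congr rfl fun l _ => termval j l
  have alg : ∑ j, ∑ l, (a j * a l) * (if j = l then ((c:ℝ) + 3 * (c:ℝ)^2) else (c:ℝ)^2)
      = ((c:ℝ) + 2 * (c:ℝ) ^ 2) * (∑ j, a j ^ 2) + (c:ℝ) ^ 2 * (∑ j, a j) ^ 2 := by
    have hsplit : ∀ j l : Fin p, (a j * a l) * (if j = l then ((c:ℝ) + 3 * (c:ℝ)^2) else (c:ℝ)^2)
        = a j * a l * (c:ℝ)^2 + (if j = l then a j * a l * ((c:ℝ) + 2 * (c:ℝ)^2) else 0) := by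
      intro j l
      by_cases hjl : j = l
      · rw [if_pos hjl, if_pos hjl]; ring
      · rw [if_neg hjl, if_neg hjl]; ring
    simp_rw [hsplit, Finset.sum_add_distrib, Finset.sum_ite_eq, Finset.mem_univ, if_true]
    have h1 : ∑ j, ∑ l, a j * a l * (c:ℝ)^2 = (c:ℝ)^2 * (∑ j, a j)^2 := by
      rw [sq (∑ j, a j), Finset.sum_mul_sum, Finset.mul_sum]
      refine Finset.sum_congr rfl fun j _ => ?_
      rw [Finset.mul_sum]
      exact Finset.sum_congr rfl fun l _ => by ring
    have h2 : ∑ j, a j * a j * ((c:ℝ) + 2 * (c:ℝ)^2)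
        = ((c:ℝ) + 2 * (c:ℝ)^2) * ∑ j, a j ^ 2 := by
      rw [Finset.mul_sum]
      exact Finset.sum_congr rfl fun j _ => by ring
    rw [h1, h2]
    ring
  exact swap.trans alg
/-- In the quadratic-kernel setting with data `x_i = e_i`, the ridgeless
estimator `f̂(x) = (a1²+a2²)⁻¹ Σ_i (a1² x_i + a2² x_i²) β_i` differs from the
linear target `f*(x) = Σ_i β_i x_i` by the function represented by
`(a2²/(a1²+a2²)) [-β, diag(β)]`, and for `x ∼ N(0, c I_p)`,
`E[(f̂(x) - f*(x))²] = (a2²/(a1²+a2²))² ((c + 2c²) Σ β_i² + c² (Σ β_i)²)`. -/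
theorem quadratic_kernel_generalization_error (n p : ℕ) (hnp : n ≤ p)
    (a1 a2 : ℝ) (ha : a1 ^ 2 + a2 ^ 2 ≠ 0) (c : NNReal) (β : Fin n → ℝ) :
    let βext : Fin p → ℝ := fun j => if h : (j : ℕ) < n then β ⟨j, h⟩ else 0
    let fhat : (Fin p → ℝ) → ℝ := fun x =>
      (a1 ^ 2 + a2 ^ 2)⁻¹ *
        ∑ i : Fin n,
          (a1 ^ 2 * x (Fin.castLE hnp i) + a2 ^ 2 * x (Fin.castLE hnp i) ^ 2) * β i
    let fstar : (Fin p → ℝ) → ℝ := fun x => ∑ i : Fin n, β i * x (Fin.castLE hnp i)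
    -- representation of the difference by `(a2²/(a1²+a2²)) [-β, diag(β)]`
    (∀ x : Fin p → ℝ,
      fhat x - fstar x =
        (-(a2 ^ 2 / (a1 ^ 2 + a2 ^ 2)) • βext) ⬝ᵥ x +
          x ⬝ᵥ ((a2 ^ 2 / (a1 ^ 2 + a2 ^ 2)) • Matrix.diagonal βext).mulVec x) ∧
    -- Gaussian generalization error
    ∫ x : Fin p → ℝ, (fhat x - fstar x) ^ 2
        ∂(Measure.pi fun _ : Fin p => gaussianReal 0 c) =
      (a2 ^ 2 / (a1 ^ 2 + a2 ^ 2)) ^ 2 *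
        (((c : ℝ) + 2 * (c : ℝ) ^ 2) * (∑ i, β i ^ 2) + (c : ℝ) ^ 2 * (∑ i, β i) ^ 2) := by
  intro βext fhat fstar
  set q : ℝ := a2 ^ 2 / (a1 ^ 2 + a2 ^ 2) with hq
  have hcast : ∀ i : Fin n, βext (Fin.castLE hnp i) = β i := by
    intro i
    show (if h : ((Fin.castLE hnp i : Fin p) : ℕ) < n then β ⟨_, h⟩ else 0) = β i
    rw [dif_pos (by simpa using i.isLt)]
    exact congrArg β (Fin.ext (by simp))
  have hsum : ∀ F : Fin p → ℝ,
      ∑ j, βext j * F j = ∑ i : Fin n, β i * F (Fin.castLE hnp i) := by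
    intro F
    classical
    set emb : Fin n ↪ Fin p := ⟨Fin.castLE hnp, Fin.castLE_injective hnp⟩ with hemb
    have hzero : ∀ j ∈ Finset.univ, j ∉ Finset.univ.map emb → βext j * F j = 0 := by
      intro j _ hj
      have hjn : ¬ (j : ℕ) < n := by
        intro hlt
        exact hj (Finset.mem_map.mpr ⟨⟨(j : ℕ), hlt⟩, Finset.mem_univ _, Fin.ext rfl⟩)
      show (if h : (j : ℕ) < n then β ⟨j, h⟩ else 0) * F j = 0
      rw [dif_neg hjn, zero_mul]
    rw [← Finset.sum_subset (Finset.subset_univ (Finset.univ.map emb)) hzero,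
      Finset.sum_map]
    refine Finset.sum_congr rfl fun i _ => ?_
    rw [show emb i = Fin.castLE hnp i from rfl, hcast i]
  have hdiff : ∀ x : Fin p → ℝ,
      fhat x - fstar x = q * ∑ j, βext j * ((x j) ^ 2 - x j) := by
    intro x
    have key : ∀ u v : ℝ,
        (a1 ^ 2 + a2 ^ 2)⁻¹ * ((a1 ^ 2 * u + a2 ^ 2 * u ^ 2) * v) - v * u
          = q * (v * (u ^ 2 - u)) := by
      intro u v
      rw [hq]
      field_simp
      ring
    rw [hsum (fun j => (x j) ^ 2 - x j)]
    show (a1 ^ 2 + a2 ^ 2)⁻¹ *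
        (∑ i : Fin n, (a1 ^ 2 * x (Fin.castLE hnp i) + a2 ^ 2 * x (Fin.castLE hnp i) ^ 2) * β i)
        - (∑ i : Fin n, β i * x (Fin.castLE hnp i))
      = q * ∑ i : Fin n, β i * ((x (Fin.castLE hnp i)) ^ 2 - x (Fin.castLE hnp i))
    rw [Finset.mul_sum, Finset.mul_sum, ← Finset.sum_sub_distrib]
    exact Finset.sum_congr rfl fun i _ => key _ _
  constructor
  · intro x
    rw [hdiff x]
    simp only [Matrix.smul_mulVec, dotProduct, Pi.smul_apply, Pi.neg_apply,
      smul_eq_mul, Matrix.mulVec_diagonal]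
    rw [Finset.mul_sum, ← Finset.sum_add_distrib]
    exact Finset.sum_congr rfl fun j _ => by ring
  · have hptw : ∀ x : Fin p → ℝ,
        (fhat x - fstar x) ^ 2 = q ^ 2 * (∑ j, βext j * ((x j) ^ 2 - x j)) ^ 2 := by
      intro x
      rw [hdiff x]
      ring
    rw [integral_congr_ae (Filter.Eventually.of_forall hptw), integral_const_mul,
      gaussian_quad_sum c βext]
    have e1 : ∑ j, βext j ^ 2 = ∑ i, β i ^ 2 := by
      calc ∑ j, βext j ^ 2 = ∑ j, βext j * βext j := by
            exact Finset.sum_congr rfl fun j _ => sq (βext j)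
        _ = ∑ i, β i * βext (Fin.castLE hnp i) := hsum βext
        _ = ∑ i, β i ^ 2 := Finset.sum_congr rfl fun i _ => by rw [hcast i, sq]
    have e2 : ∑ j, βext j = ∑ i, β i := by
      calc ∑ j, βext j = ∑ j, βext j * 1 := by simp
        _ = ∑ i, β i * 1 := hsum (fun _ => 1)
        _ = ∑ i, β i := by simp
    rw [e1, e2]
end
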